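/- Let F ∈ F_q[x_1,…,x_N] be a polynomial of degree d > 1, let t ∈ \bar{F_q}, and let F̂_t ∈ \bar{F_q}[x_1,…,x_N,Z] denote the homogenization of F − t with respect to the extra variable Z. Then R(F) ≤ R(F̂_t) ≤ R(F) + 1. -/

import Mathlib

open MvPolynomial

/-- The rank of a homogeneous polynomial `G` of degree `d`: the minimal `r` such that
`G = ∑_{i=1}^r Q_i · P_i` with `deg Q_i < d` and `deg P_i < d`. -/
noncomputable def homRank {K : Type*} [Field K] {σ : Type*} (d : ℕ) (G : MvPolynomial σ K) : ℕ :=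
  sInf {r : ℕ | ∃ Q P : Fin r → MvPolynomial σ K,
    (∀ i, (Q i).totalDegree < d ∧ (P i).totalDegree < d) ∧ G = ∑ i, Q i * P i}

/-- The rank `R(F)` of a polynomial `F` of degree `d` over a field: the rank of the
degree-`d` homogeneous part of `F`, viewed over the algebraic closure. -/
noncomputable def polyRank {K : Type*} [Field K] {N : ℕ} (d : ℕ)
    (F : MvPolynomial (Fin N) K) : ℕ :=
  homRank d (MvPolynomial.map (algebraMap K (AlgebraicClosure K)) (homogeneousComponent d F))

/-- The degree-`d` homogenization `Ĥ(x_1, …, x_N, Z) = Z^d · H(x_1/Z, …, x_N/Z)` of a polynomial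
`H` of degree at most `d`, where `Z` is the extra (last) variable. -/
noncomputable def homogenize {K : Type*} [CommRing K] {N : ℕ} (d : ℕ)
    (H : MvPolynomial (Fin N) K) : MvPolynomial (Fin (N + 1)) K :=
  ∑ k ∈ Finset.range (d + 1),
    (X (Fin.last N)) ^ (d - k) * (rename Fin.castSucc (homogeneousComponent k H))

section Aux

lemma hc_map {R S : Type*} [CommSemiring R] [CommSemiring S] (f : R →+* S) (n : ℕ)
    {σ : Type*} (p : MvPolynomial σ R) :
    homogeneousComponent n (MvPolynomial.map f p)
      = MvPolynomial.map f (homogeneousComponent n p) := by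
  ext m
  simp only [coeff_homogeneousComponent, coeff_map]
  split <;> simp

lemma monomial_factor {K : Type*} [Field K] {σ : Type*} {d : ℕ} (hd : 1 < d)
    (a : σ →₀ ℕ) (c : K) (ha : (a.sum fun _ n => n) ≤ d) :
    ∃ Q P : MvPolynomial σ K, Q.totalDegree < d ∧ P.totalDegree < d ∧
      monomial a c = Q * P := by
  by_cases h0 : a = 0
  · exact ⟨C c, 1, by simp only [totalDegree_C]; omega, by simp only [totalDegree_one]; omega,
      by rw [h0, mul_one, C_apply]⟩
  · obtain ⟨j, hj⟩ : ∃ j, a j ≠ 0 := by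
      by_contra h; push_neg at h; exact h0 (Finsupp.ext h)
    have hkey : Finsupp.single j 1 + (a - Finsupp.single j 1) = a := by
      ext i
      by_cases hij : i = j
      · subst hij
        simp only [Finsupp.add_apply, Finsupp.tsub_apply, Finsupp.single_eq_same]
        omega
      · simp only [Finsupp.add_apply, Finsupp.tsub_apply,
          Finsupp.single_eq_of_ne' (Ne.symm hij)]
        omega
    have hsum : 1 + ((a - Finsupp.single j 1).sum fun _ n => n) = a.sum fun _ n => n := by
      conv_rhs => rw [← hkey]
      rw [Finsupp.sum_add_index' (fun _ => rfl) (fun _ _ _ => rfl)]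
      simp
    refine ⟨X j, monomial (a - Finsupp.single j 1) c, ?_, ?_, ?_⟩
    · rw [totalDegree_X]; omega
    · refine lt_of_le_of_lt (totalDegree_monomial_le _ _) ?_
      have hid : ((a - Finsupp.single j 1).sum fun _ => id)
          = ((a - Finsupp.single j 1).sum fun _ n => n) := rfl
      omega
    · rw [X, monomial_mul, one_mul, hkey]

lemma exists_factorization {K : Type*} [Field K] {σ : Type*} {d : ℕ} (hd : 1 < d)
    (G : MvPolynomial σ K) (hG : G.totalDegree ≤ d) :
    ∃ r : ℕ, ∃ Q P : Fin r → MvPolynomial σ K,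
      (∀ i, (Q i).totalDegree < d ∧ (P i).totalDegree < d) ∧ G = ∑ i, Q i * P i := by
  choose Q P hQ hP hfac using fun (a : G.support) =>
    monomial_factor hd (a : σ →₀ ℕ) (coeff a G) (le_trans (le_totalDegree a.2) hG)
  refine ⟨G.support.card, Q ∘ G.support.equivFin.symm, P ∘ G.support.equivFin.symm,
    fun i => ⟨hQ _, hP _⟩, ?_⟩
  simp only [Function.comp_apply]
  calc G = ∑ v ∈ G.support, monomial v (coeff v G) := G.as_sum
    _ = ∑ a : G.support, monomial (a : σ →₀ ℕ) (coeff a G) := by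
        rw [← Finset.sum_attach G.support (fun v => monomial v (coeff v G))]
        rfl
    _ = ∑ a : G.support, Q a * P a := Finset.sum_congr rfl fun a _ => hfac a
    _ = _ := (Equiv.sum_comp G.support.equivFin.symm fun a => Q a * P a).symm

lemma totalDegree_aeval_le {K : Type*} [Field K] {σ τ : Type*}
    (g : σ → MvPolynomial τ K) (hg : ∀ i, (g i).totalDegree ≤ 1) (p : MvPolynomial σ K) :
    ((aeval g) p).totalDegree ≤ p.totalDegree := by
  conv_lhs => rw [p.as_sum]
  rw [map_sum]
  apply totalDegree_finsetSum_le
  intro a ha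
  rw [aeval_monomial]
  refine le_trans (totalDegree_mul _ _) ?_
  have h1 : (algebraMap K (MvPolynomial τ K) (coeff a p)).totalDegree = 0 :=
    totalDegree_C _
  rw [h1, zero_add]
  refine le_trans ?_ (le_totalDegree ha)
  rw [Finsupp.prod]
  refine le_trans (totalDegree_finset_prod _ _) ?_
  rw [Finsupp.sum]
  apply Finset.sum_le_sum
  intro i _
  refine le_trans (totalDegree_pow _ _) ?_
  calc a i * (g i).totalDegree ≤ a i * 1 := Nat.mul_le_mul_left _ (hg i)
    _ = a i := mul_one _

lemma homRank_le {K : Type*} [Field K] {σ : Type*} {d : ℕ} {G : MvPolynomial σ K} {r : ℕ}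
    (h : ∃ Q P : Fin r → MvPolynomial σ K,
      (∀ i, (Q i).totalDegree < d ∧ (P i).totalDegree < d) ∧ G = ∑ i, Q i * P i) :
    homRank d G ≤ r :=
  Nat.sInf_le h

lemma homRank_mem {K : Type*} [Field K] {σ : Type*} {d : ℕ} {G : MvPolynomial σ K}
    (hd : 1 < d) (hG : G.totalDegree ≤ d) :
    ∃ Q P : Fin (homRank d G) → MvPolynomial σ K,
      (∀ i, (Q i).totalDegree < d ∧ (P i).totalDegree < d) ∧ G = ∑ i, Q i * P i :=
  Nat.sInf_mem (exists_factorization hd G hG)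

end Aux

/-- Let `F ∈ F_q[x_1, …, x_N]` have degree `d > 1`, let `t ∈ \bar{F_q}` and let `F̂_t` be the
homogenization of `F − t` with respect to the extra variable `Z`.  Then
`R(F) ≤ R(F̂_t) ≤ R(F) + 1`. -/
theorem statement2 (K : Type) [Field K] [Fintype K] (N d : ℕ) (hd : 1 < d)
    (F : MvPolynomial (Fin N) K) (hdeg : F.totalDegree = d) (t : AlgebraicClosure K) :
    polyRank d F ≤
        homRank d (homogenize d
          (MvPolynomial.map (algebraMap K (AlgebraicClosure K)) F - C t)) ∧
      homRank d (homogenize d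
          (MvPolynomial.map (algebraMap K (AlgebraicClosure K)) F - C t)) ≤
        polyRank d F + 1 := by
  classical
  set H : MvPolynomial (Fin N) (AlgebraicClosure K) := MvPolynomial.map (algebraMap K (AlgebraicClosure K)) F - C t with hH
  set G₀ : MvPolynomial (Fin N) (AlgebraicClosure K) :=
    MvPolynomial.map (algebraMap K (AlgebraicClosure K)) (homogeneousComponent d F) with hG₀
  -- (a) the top homogeneous component of H is G₀
  have hct : homogeneousComponent d (C t : MvPolynomial (Fin N) (AlgebraicClosure K)) = 0 := by
    apply homogeneousComponent_eq_zero
    rw [totalDegree_C]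
    omega
  have ha : homogeneousComponent d H = G₀ := by
    rw [hH, map_sub, hct, sub_zero, hc_map]
  -- (b) totalDegree G₀ ≤ d
  have hb : G₀.totalDegree ≤ d := by
    rw [hG₀, ← hc_map]
    exact (homogeneousComponent_isHomogeneous d _).totalDegree_le
  -- degree of each homogeneous component
  have hck : ∀ k, (homogeneousComponent k H).totalDegree ≤ k :=
    fun k => (homogeneousComponent_isHomogeneous k H).totalDegree_le
  -- (c) totalDegree of the homogenization ≤ d
  have hc : (homogenize d H).totalDegree ≤ d := by
    rw [homogenize]
    apply totalDegree_finsetSum_le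
    intro k hk
    rw [Finset.mem_range] at hk
    refine le_trans (totalDegree_mul _ _) ?_
    have h1 : ((X (Fin.last N) : MvPolynomial (Fin (N+1)) (AlgebraicClosure K)) ^ (d - k)).totalDegree = d - k :=
      totalDegree_X_pow _ _
    have h2 : ((rename (Fin.castSucc (n := N))) (homogeneousComponent k H)).totalDegree ≤ k :=
      le_trans (totalDegree_rename_le _ _) (hck k)
    omega
  -- the substitution Z := 0
  set g : Fin (N + 1) → MvPolynomial (Fin N) (AlgebraicClosure K) :=
    fun i => Fin.lastCases 0 (fun j => X j) i with hg
  have hglast : g (Fin.last N) = 0 := by simp [hg]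
  have hgcast : ∀ j : Fin N, g (Fin.castSucc j) = X j := by simp [hg]
  have hg1 : ∀ i, (g i).totalDegree ≤ 1 := by
    intro i
    induction i using Fin.lastCases with
    | last => rw [hglast, totalDegree_zero]; omega
    | cast j => rw [hgcast, totalDegree_X]
  have hφrename : ∀ p : MvPolynomial (Fin N) (AlgebraicClosure K), aeval g (rename Fin.castSucc p) = p := by
    intro p
    rw [aeval_rename]
    have : (g ∘ Fin.castSucc) = fun j : Fin N => (X j : MvPolynomial (Fin N) (AlgebraicClosure K)) := by
      funext j; exact hgcast j
    rw [this]
    exact aeval_X_left_apply p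
  -- (d) substituting Z := 0 in the homogenization recovers G₀
  have hdsub : aeval g (homogenize d H) = G₀ := by
    rw [homogenize, map_sum, Finset.sum_range_succ]
    have hzero : ∀ k ∈ Finset.range d,
        aeval g ((X (Fin.last N) : MvPolynomial (Fin (N+1)) (AlgebraicClosure K)) ^ (d - k) *
          rename Fin.castSucc (homogeneousComponent k H)) = 0 := by
      intro k hk
      rw [Finset.mem_range] at hk
      rw [map_mul, map_pow, aeval_X, hglast, zero_pow (by omega), zero_mul]
    rw [Finset.sum_congr rfl hzero, Finset.sum_const, smul_zero, zero_add,
      map_mul, map_pow, aeval_X, hglast, Nat.sub_self, pow_zero, one_mul, hφrename, ha]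
  constructor
  · -- lower bound
    have hpoly : polyRank d F = homRank d G₀ := rfl
    rw [hpoly]
    obtain ⟨Q, P, hQP, hfac⟩ := homRank_mem hd hc
    refine homRank_le ⟨fun i => aeval g (Q i), fun i => aeval g (P i), fun i =>
      ⟨lt_of_le_of_lt (totalDegree_aeval_le g hg1 _) (hQP i).1,
       lt_of_le_of_lt (totalDegree_aeval_le g hg1 _) (hQP i).2⟩, ?_⟩
    rw [← hdsub]
    refine Eq.trans (congrArg (aeval g) hfac) ?_
    rw [map_sum]
    exact Finset.sum_congr rfl fun i _ => map_mul _ _ _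
  · -- upper bound
    have hpoly : polyRank d F = homRank d G₀ := rfl
    rw [hpoly]
    obtain ⟨Q, P, hQP, hfac⟩ := homRank_mem hd hb
    set Lrem : MvPolynomial (Fin (N + 1)) (AlgebraicClosure K) :=
      ∑ k ∈ Finset.range d, (X (Fin.last N)) ^ (d - 1 - k) *
        rename Fin.castSucc (homogeneousComponent k H) with hLrem
    have hLdeg : Lrem.totalDegree < d := by
      rw [hLrem]
      refine lt_of_le_of_lt (b := d - 1) ?_ (by omega)
      apply totalDegree_finsetSum_le
      intro k hk
      rw [Finset.mem_range] at hk
      refine le_trans (totalDegree_mul _ _) ?_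
      have h1 : ((X (Fin.last N) : MvPolynomial (Fin (N+1)) (AlgebraicClosure K)) ^ (d - 1 - k)).totalDegree
          = d - 1 - k := totalDegree_X_pow _ _
      have h2 : ((rename (Fin.castSucc (n := N))) (homogeneousComponent k H)).totalDegree ≤ k :=
        le_trans (totalDegree_rename_le _ _) (hck k)
      omega
    have hsum : ∑ k ∈ Finset.range d,
        (X (Fin.last N) : MvPolynomial (Fin (N + 1)) (AlgebraicClosure K)) ^ (d - k) *
          rename Fin.castSucc (homogeneousComponent k H) = X (Fin.last N) * Lrem := by
      rw [hLrem, Finset.mul_sum]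
      refine Finset.sum_congr rfl fun k hk => ?_
      rw [Finset.mem_range] at hk
      have hdk : d - k = (d - 1 - k) + 1 := by omega
      rw [hdk, pow_succ', mul_assoc]
    have hhom : homogenize d H
        = rename Fin.castSucc G₀ + X (Fin.last N) * Lrem := by
      rw [homogenize, Finset.sum_range_succ, Nat.sub_self, pow_zero, one_mul, ha, hsum]
      exact add_comm _ _
    refine homRank_le ⟨Fin.snoc (fun i => rename Fin.castSucc (Q i)) (X (Fin.last N)),
      Fin.snoc (fun i => rename Fin.castSucc (P i)) Lrem, ?_, ?_⟩
    · intro i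
      induction i using Fin.lastCases with
      | last =>
        rw [Fin.snoc_last, Fin.snoc_last]
        exact ⟨by rw [totalDegree_X]; omega, hLdeg⟩
      | cast j =>
        rw [Fin.snoc_castSucc, Fin.snoc_castSucc]
        exact ⟨lt_of_le_of_lt (totalDegree_rename_le _ _) (hQP j).1,
          lt_of_le_of_lt (totalDegree_rename_le _ _) (hQP j).2⟩
    · rw [Fin.sum_univ_castSucc]
      simp only [Fin.snoc_castSucc, Fin.snoc_last]
      have h1 : (rename (Fin.castSucc (n := N))) G₀
          = ∑ i, rename Fin.castSucc (Q i) * rename Fin.castSucc (P i) := by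
        refine (congrArg (rename Fin.castSucc) hfac).trans ?_
        rw [map_sum]
        exact Finset.sum_congr rfl fun i _ => map_mul _ _ _
      rw [hhom, h1]
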